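/- If Y dominates X, i.e. there exist continuous maps f : X → Y and g : Y → X with g ∘ f homotopic to id_X, then for every open set U ⊆ Y contractible in Y, the preimage f⁻¹(U) is an open subset of X contractible in X. -/

import Mathlib

open Set

def ContractibleIn {X : Type*} [TopologicalSpace X] (A : Set X) : Prop :=
  ∃ c : X, (⟨Subtype.val, continuous_subtype_val⟩ : C(A, X)).Homotopic (ContinuousMap.const A c)

/-- if `Y` dominates `X` via `f : X → Y`, `g : Y → X`, `g ∘ f ≃ id`, then the
preimage under `f` of an open set contractible in `Y` is open and contractible in `X`. -/
theorem preimage_contractible_of_dominates {X Y : Type*}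
    [TopologicalSpace X] [TopologicalSpace Y]
    (f : C(X, Y)) (g : C(Y, X)) (hgf : (g.comp f).Homotopic (ContinuousMap.id X))
    (U : Set Y) (hU : IsOpen U) (hUc : ContractibleIn U) :
    IsOpen (f ⁻¹' U) ∧ ContractibleIn (f ⁻¹' U) := by
  refine ⟨hU.preimage f.continuous, ?_⟩
  obtain ⟨c, hc⟩ := hUc
  set A := f ⁻¹' U
  set valA : C(A, X) := ⟨Subtype.val, continuous_subtype_val⟩
  set valU : C(U, Y) := ⟨Subtype.val, continuous_subtype_val⟩
  set r : C(A, U) := ⟨fun a => ⟨f a.1, a.2⟩, by continuity⟩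
  refine ⟨g c, ?_⟩
  have h1 : valA.Homotopic ((g.comp f).comp valA) := by
    simpa using (ContinuousMap.Homotopic.comp hgf (ContinuousMap.Homotopic.refl valA)).symm
  have h2 : (g.comp f).comp valA = (g.comp valU).comp r := by
    ext a; rfl
  have h3 : ((g.comp valU).comp r).Homotopic (ContinuousMap.const A (g c)) := by
    have := ContinuousMap.Homotopic.comp
      (ContinuousMap.Homotopic.comp (ContinuousMap.Homotopic.refl g) hc) (ContinuousMap.Homotopic.refl r)
    simpa [ContinuousMap.comp_assoc] using this
  exact h1.trans (h2 ▸ h3)
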